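/- A Hamming graph, i.e., a finite product of complete graphs K_{n₁} × ⋯ × K_{n_k} (with the Cartesian product adjacency), contains no induced subgraph isomorphic to K₄ minus an edge and no induced K_{3,2}. -/

import Mathlib

/-- `K₄⁻`: the complete graph on four vertices minus the edge `{2,3}`. -/
def K4minus : SimpleGraph (Fin 4) :=
  SimpleGraph.fromRel (fun a b => ¬((a = 2 ∧ b = 3) ∨ (a = 3 ∧ b = 2)))

/-- The Hamming graph: the Cartesian product of the complete graphs `K_{n i}`; two tuples
are adjacent iff they differ in exactly one coordinate. -/
def hammingGraph (k : ℕ) (n : Fin k → ℕ) : SimpleGraph (∀ i, Fin (n i)) where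
  Adj x y := ∃! i, x i ≠ y i
  symm := by
    constructor
    rintro x y ⟨i, hi, hu⟩
    exact ⟨i, hi.symm, fun j hj => hu j hj.symm⟩
  loopless := by
    constructor
    rintro x ⟨i, hi, -⟩
    exact hi rfl

/-- From an adjacency in the Hamming graph, extract the unique differing coordinate. -/
lemma ham_adj_elim {k : ℕ} {n : Fin k → ℕ} {x y : ∀ i, Fin (n i)}
    (h : (hammingGraph k n).Adj x y) :
    ∃ i, x i ≠ y i ∧ ∀ j, j ≠ i → x j = y j := by
  obtain ⟨i, hi, hu⟩ := h
  exact ⟨i, hi, fun j hj => not_ne_iff.mp (fun h' => hj (hu j h'))⟩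

/-- Build an adjacency in the Hamming graph. -/
lemma ham_adj_intro {k : ℕ} {n : Fin k → ℕ} {x y : ∀ i, Fin (n i)} (i : Fin k)
    (h : x i ≠ y i) (ho : ∀ j, j ≠ i → x j = y j) : (hammingGraph k n).Adj x y :=
  ⟨i, h, fun j hj => by_contra fun h' => hj (ho j h')⟩

/-- In a triangle of the Hamming graph, all three vertices differ in the same coordinate. -/
lemma ham_tri {k : ℕ} {n : Fin k → ℕ} {x y z : ∀ i, Fin (n i)} (i : Fin k)
    (hxy : x i ≠ y i) (ho : ∀ j, j ≠ i → x j = y j)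
    (hxz : (hammingGraph k n).Adj x z) (hyz : (hammingGraph k n).Adj y z) :
    x i ≠ z i ∧ y i ≠ z i ∧ ∀ j, j ≠ i → x j = z j := by
  obtain ⟨i', h1, h2⟩ := ham_adj_elim hxz
  have hii : i' = i := by
    by_contra hne
    have hy1 : y i' ≠ z i' := by rw [← ho i' hne]; exact h1
    have hy2 : y i ≠ z i := by
      rw [← h2 i (fun h => hne h.symm)]
      exact fun h => hxy h.symm
    obtain ⟨m, _, hmu⟩ := hyz
    exact hne ((hmu i' hy1).trans (hmu i hy2).symm)
  rw [hii] at h1 h2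
  refine ⟨h1, ?_, h2⟩
  intro hyi
  exact hyz.ne (funext fun j => by
    by_cases hj : j = i
    · subst hj; exact hyi
    · exact (ho j hj).symm.trans (h2 j hj))

/-- Two distinct, non-adjacent common neighbours of `b` differ from `b` in distinct
coordinates. -/
lemma ham_dc {k : ℕ} {n : Fin k → ℕ} {x y b : ∀ i, Fin (n i)} (i j : Fin k)
    (hx : x i ≠ b i) (hxo : ∀ l, l ≠ i → x l = b l)
    (hy : y j ≠ b j) (hyo : ∀ l, l ≠ j → y l = b l)
    (hne : x ≠ y) (hna : ¬ (hammingGraph k n).Adj x y) : i ≠ j := by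
  rintro rfl
  by_cases h : x i = y i
  · exact hne (funext fun l => by
      by_cases hl : l = i
      · subst hl; exact h
      · exact (hxo l hl).trans (hyo l hl).symm)
  · exact hna (ham_adj_intro i h (fun l hl => (hxo l hl).trans (hyo l hl).symm))

/-- A Hamming graph (finite product of complete graphs) contains no induced `K₄⁻` and
no induced `K_{3,2}`. -/
theorem hammingGraph_no_K4minus_no_K32 (k : ℕ) (n : Fin k → ℕ) :
    IsEmpty (K4minus ↪g hammingGraph k n) ∧
    IsEmpty (completeBipartiteGraph (Fin 3) (Fin 2) ↪g hammingGraph k n) := by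
  constructor
  · constructor
    intro f
    have hab : (hammingGraph k n).Adj (f 0) (f 1) :=
      f.map_rel_iff.mpr (show K4minus.Adj 0 1 by simp only [K4minus, SimpleGraph.fromRel_adj]; decide)
    obtain ⟨i, hi, ho⟩ := ham_adj_elim hab
    obtain ⟨hac, hbc, hoc⟩ := ham_tri i hi ho
      (f.map_rel_iff.mpr (show K4minus.Adj 0 2 by simp only [K4minus, SimpleGraph.fromRel_adj]; decide))
      (f.map_rel_iff.mpr (show K4minus.Adj 1 2 by simp only [K4minus, SimpleGraph.fromRel_adj]; decide))
    obtain ⟨had, hbd, hod⟩ := ham_tri i hi ho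
      (f.map_rel_iff.mpr (show K4minus.Adj 0 3 by simp only [K4minus, SimpleGraph.fromRel_adj]; decide))
      (f.map_rel_iff.mpr (show K4minus.Adj 1 3 by simp only [K4minus, SimpleGraph.fromRel_adj]; decide))
    have hcd : f 2 i ≠ f 3 i := by
      intro h
      have : f 2 = f 3 := funext fun j => by
        by_cases hj : j = i
        · subst hj; exact h
        · exact (hoc j hj).symm.trans (hod j hj)
      exact (show (2 : Fin 4) ≠ 3 by decide) (f.injective this)
    have : K4minus.Adj 2 3 := f.map_rel_iff.mp
      (ham_adj_intro i hcd (fun j hj => (hoc j hj).symm.trans (hod j hj)))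
    exact (show ¬ K4minus.Adj 2 3 by simp only [K4minus, SimpleGraph.fromRel_adj]; decide) this
  · constructor
    intro f
    set G := completeBipartiteGraph (Fin 3) (Fin 2)
    have adj : ∀ (a : Fin 3) (b : Fin 2),
        (hammingGraph k n).Adj (f (Sum.inl a)) (f (Sum.inr b)) := fun a b =>
      f.map_rel_iff.mpr (by simp [G, completeBipartiteGraph])
    have nadj : ∀ (a a' : Fin 3), ¬ (hammingGraph k n).Adj (f (Sum.inl a)) (f (Sum.inl a')) :=
      fun a a' h => by simpa [G, completeBipartiteGraph] using f.map_rel_iff.mp h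
    have inj : ∀ (a a' : Fin 3), a ≠ a' → f (Sum.inl a) ≠ f (Sum.inl a') :=
      fun a a' h h' => h (Sum.inl.inj (f.injective h'))
    obtain ⟨i0, hi0, ho0⟩ := ham_adj_elim (adj 0 0)
    obtain ⟨i1, hi1, ho1⟩ := ham_adj_elim (adj 1 0)
    obtain ⟨i2, hi2, ho2⟩ := ham_adj_elim (adj 2 0)
    obtain ⟨j0, hj0, go0⟩ := ham_adj_elim (adj 0 1)
    obtain ⟨j1, hj1, go1⟩ := ham_adj_elim (adj 1 1)
    obtain ⟨j2, hj2, go2⟩ := ham_adj_elim (adj 2 1)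
    have hi01 : i0 ≠ i1 := ham_dc i0 i1 hi0 ho0 hi1 ho1 (inj 0 1 (by decide)) (nadj 0 1)
    have hi12 : i1 ≠ i2 := ham_dc i1 i2 hi1 ho1 hi2 ho2 (inj 1 2 (by decide)) (nadj 1 2)
    have hj01 : j0 ≠ j1 := ham_dc j0 j1 hj0 go0 hj1 go1 (inj 0 1 (by decide)) (nadj 0 1)
    have hj02 : j0 ≠ j2 := ham_dc j0 j2 hj0 go0 hj2 go2 (inj 0 2 (by decide)) (nadj 0 2)
    -- j0 ∈ {i0, i1}
    have mem1 : j0 = i0 ∨ j0 = i1 := by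
      by_contra h
      push_neg at h
      obtain ⟨h1, h2⟩ := h
      have e1 : f (Sum.inl 0) j0 = f (Sum.inr 0) j0 := ho0 j0 h1
      have e2 : f (Sum.inl 1) j0 = f (Sum.inr 0) j0 := ho1 j0 h2
      have e3 : f (Sum.inl 1) j0 = f (Sum.inr 1) j0 := go1 j0 hj01
      exact hj0 (e1.trans (e2.symm.trans e3))
    -- j0 ∈ {i0, i2}
    have mem2 : j0 = i0 ∨ j0 = i2 := by
      by_contra h
      push_neg at h
      obtain ⟨h1, h2⟩ := h
      have e1 : f (Sum.inl 0) j0 = f (Sum.inr 0) j0 := ho0 j0 h1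
      have e2 : f (Sum.inl 2) j0 = f (Sum.inr 0) j0 := ho2 j0 h2
      have e3 : f (Sum.inl 2) j0 = f (Sum.inr 1) j0 := go2 j0 hj02
      exact hj0 (e1.trans (e2.symm.trans e3))
    have hj0i0 : j0 = i0 := by
      rcases mem1 with h | h
      · exact h
      · rcases mem2 with h' | h'
        · exact h'
        · exact absurd (h.symm.trans h') hi12
    have hbb : f (Sum.inr 0) = f (Sum.inr 1) := funext fun l => by
      by_cases hl : l = i0
      · rw [hl]
        have e1 : f (Sum.inl 1) i0 = f (Sum.inr 0) i0 := ho1 i0 hi01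
        have e2 : f (Sum.inl 1) i0 = f (Sum.inr 1) i0 :=
          go1 i0 (fun h => hj01 (hj0i0.trans h))
        exact e1.symm.trans e2
      · have e1 : f (Sum.inl 0) l = f (Sum.inr 0) l := ho0 l hl
        have e2 : f (Sum.inl 0) l = f (Sum.inr 1) l := go0 l (fun h => hl (h.trans hj0i0))
        exact e1.symm.trans e2
    exact (show (0 : Fin 2) ≠ 1 by decide) (Sum.inr.inj (f.injective hbb))
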